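/- Let G be a real solvable Lie algebra of dimension n ≥ 4 whose derived ideal G¹ = [G,G] is abelian of dimension n − 2, with A_G of dimension 1, and let Y, Z ∈ G be linearly independent elements not in G¹ with a_Y = 0 and A_G = span{a_Z}. Suppose [Y,Z] ≠ 0 and a_Z is singular (not injective on G¹). Then: (i) G is indecomposable; (ii) the rank of a_Z equals n − 3; and (iii) there exist a basis (X₁, …, X_{n−2}) of G¹ and elements Y′, Z′ ∈ G with G = G¹ ⊕ span{Y′, Z′} as vector spaces, [Z′, Y′] = X_{n−2}, [Y′, X_i] = 0 for all i, and the matrix of a_{Z′} in the basis (X₁, …, X_{n−2}) has block form [[A,0],[0,0]] or [[0,A],[0,0]] for some invertible (n−3)×(n−3) real matrix A (in the first form A occupies rows and columns 1,…,n−3; in the second form the first column is zero and A occupies rows 1,…,n−3 and columns 2,…,n−2). -/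

import Mathlib

open Module

/-- The restriction to a Lie ideal `I` of the adjoint operator `ad X`,
as a linear endomorphism of `I`. -/
noncomputable def adRestrict {G : Type*} [LieRing G] [LieAlgebra ℝ G]
    (I : LieIdeal ℝ G) (X : G) : Module.End ℝ (I : Submodule ℝ G) :=
  (LieAlgebra.ad ℝ G X).restrict fun v hv => I.lie_mem hv

/-- The span `A_G` of the restricted adjoint operators inside `End(G¹)`. -/
noncomputable def adSpan (G : Type*) [LieRing G] [LieAlgebra ℝ G] :
    Submodule ℝ (Module.End ℝ ((LieAlgebra.derivedSeries ℝ G 1 : LieIdeal ℝ G) : Submodule ℝ G)) :=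
  Submodule.span ℝ (Set.range fun X : G => adRestrict (LieAlgebra.derivedSeries ℝ G 1) X)

/-- The `(k+1)`-square matrix `[[A, 0], [0, 0]]`: `A` occupies rows and columns `0,…,k-1`. -/
def blockDiag {k : ℕ} (A : Matrix (Fin k) (Fin k) ℝ) : Matrix (Fin (k + 1)) (Fin (k + 1)) ℝ :=
  fun i j => if h : (i : ℕ) < k ∧ (j : ℕ) < k then A ⟨i, h.1⟩ ⟨j, h.2⟩ else 0

/-- The `(k+1)`-square matrix `[[0, A], [0, 0]]`: zero first column, `A` occupies rows
`0,…,k-1` and columns `1,…,k`. -/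
def blockShift {k : ℕ} (A : Matrix (Fin k) (Fin k) ℝ) : Matrix (Fin (k + 1)) (Fin (k + 1)) ℝ :=
  fun i j =>
    if h : (i : ℕ) < k ∧ 0 < (j : ℕ) then A ⟨i, h.1⟩ ⟨(j : ℕ) - 1, by
      have := j.isLt; omega⟩ else 0

private lemma exists_basis_first {W : Type*} [AddCommGroup W] [Module ℝ W]
    [FiniteDimensional ℝ W] {p : ℕ} (hp : Module.finrank ℝ W = p + 1) (x : W) (hx : x ≠ 0) :
    ∃ e : Basis (Fin (p + 1)) ℝ W, e 0 = x := by
  obtain ⟨C, hC⟩ := (Submodule.span ℝ {x}).exists_isCompl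
  have hdim : finrank ℝ (Submodule.span ℝ {x}) + finrank ℝ C = p + 1 := by
    rw [Submodule.finrank_add_eq_of_isCompl hC, hp]
  rw [finrank_span_singleton hx] at hdim
  have hCd : finrank ℝ C = p := by omega
  let bC : Basis (Fin p) ℝ C := (finBasis ℝ C).reindex (finCongr hCd)
  let f : Fin (p + 1) → W := Fin.cons x fun i => (bC i : W)
  have hspanC : Submodule.span ℝ (Set.range fun i => (bC i : W)) = C := by
    have : (Set.range fun i => (bC i : W)) = C.subtype '' Set.range bC := by
      rw [← Set.range_comp]; rfl
    rw [this, Submodule.span_image, Basis.span_eq, Submodule.map_subtype_top]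
  have hli : LinearIndependent ℝ f := by
    rw [linearIndependent_fin_cons]
    refine ⟨(bC.linearIndependent).map' C.subtype (Submodule.ker_subtype C), ?_⟩
    rw [hspanC]
    intro hxC
    exact hx (by simpa using ((hC.inf_eq_bot) ▸ Submodule.mem_inf.2
      ⟨Submodule.mem_span_singleton_self x, hxC⟩ : x ∈ (⊥ : Submodule ℝ W)))
  have hcard : Fintype.card (Fin (p + 1)) = finrank ℝ W := by simp [hp]
  refine ⟨basisOfLinearIndependentOfCardEqFinrank hli hcard, ?_⟩
  rw [coe_basisOfLinearIndependentOfCardEqFinrank]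
  simp [f]

set_option maxHeartbeats 2000000 in

set_option maxHeartbeats 2000000 in
/-- under the hypotheses of Theorem 2 with `[Y,Z] ≠ 0` and `a_Z` singular,
`G` is indecomposable, `rank a_Z = n - 3`, and there is an adapted basis of `G¹` in which
`a_{Z'}` has one of the two block forms `[[A,0],[0,0]]` or `[[0,A],[0,0]]` with `A`
invertible. -/
theorem indecomposable_case_B_of_codim_two
    (G : Type*) [LieRing G] [LieAlgebra ℝ G] [FiniteDimensional ℝ G]
    [LieAlgebra.IsSolvable G] (n : ℕ) (hn : Module.finrank ℝ G = n) (hn4 : 4 ≤ n)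
    (habelian : ∀ u v : G, u ∈ LieAlgebra.derivedSeries ℝ G 1 →
      v ∈ LieAlgebra.derivedSeries ℝ G 1 → ⁅u, v⁆ = 0)
    (hdim : Module.finrank ℝ (LieAlgebra.derivedSeries ℝ G 1) = n - 2)
    (hA : Module.finrank ℝ (adSpan G) = 1)
    (Y Z : G) (hind : LinearIndependent ℝ ![Y, Z])
    (hY : Y ∉ LieAlgebra.derivedSeries ℝ G 1) (hZ : Z ∉ LieAlgebra.derivedSeries ℝ G 1)
    (haY : adRestrict (LieAlgebra.derivedSeries ℝ G 1) Y = 0)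
    (hspan : (adSpan G : Submodule ℝ _) =
      Submodule.span ℝ {adRestrict (LieAlgebra.derivedSeries ℝ G 1) Z})
    (hYZ : ⁅Y, Z⁆ ≠ 0)
    (hsing : ¬ Function.Injective (adRestrict (LieAlgebra.derivedSeries ℝ G 1) Z)) :
    (¬ ∃ I J : LieIdeal ℝ G, I ≠ ⊥ ∧ J ≠ ⊥ ∧ I ⊓ J = ⊥ ∧ I ⊔ J = ⊤) ∧
    Module.finrank ℝ
      (LinearMap.range (adRestrict (LieAlgebra.derivedSeries ℝ G 1) Z)) = n - 3 ∧
    ∃ (B : Basis (Fin (n - 3 + 1)) ℝ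
        ((LieAlgebra.derivedSeries ℝ G 1 : LieIdeal ℝ G) : Submodule ℝ G))
      (Y' Z' : G),
      ((LieAlgebra.derivedSeries ℝ G 1 : LieIdeal ℝ G) : Submodule ℝ G) ⊓
        Submodule.span ℝ {Y', Z'} = ⊥ ∧
      ((LieAlgebra.derivedSeries ℝ G 1 : LieIdeal ℝ G) : Submodule ℝ G) ⊔
        Submodule.span ℝ {Y', Z'} = ⊤ ∧
      ⁅Z', Y'⁆ = (B (Fin.last (n - 3)) : G) ∧
      (∀ i, ⁅Y', (B i : G)⁆ = 0) ∧
      ∃ A : Matrix (Fin (n - 3)) (Fin (n - 3)) ℝ, IsUnit A ∧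
        (LinearMap.toMatrix B B (adRestrict (LieAlgebra.derivedSeries ℝ G 1) Z') = blockDiag A ∨
         LinearMap.toMatrix B B (adRestrict (LieAlgebra.derivedSeries ℝ G 1) Z') =
           blockShift A) := by
  classical
  set D : LieIdeal ℝ G := LieAlgebra.derivedSeries ℝ G 1 with hDdef
  set aZ := adRestrict D Z with haZdef
  set Rng := LinearMap.range aZ with hRngdef
  -- basic facts
  have hw : ⁅Y, Z⁆ ∈ D := by
    rw [hDdef, LieAlgebra.derivedSeries_def, LieAlgebra.derivedSeriesOfIdeal_succ,
      LieAlgebra.derivedSeriesOfIdeal_zero]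
    exact LieSubmodule.lie_mem_lie trivial trivial
  have hspanD : ∀ S : Submodule ℝ G, (∀ x y : G, ⁅x, y⁆ ∈ S) → (D : Submodule ℝ G) ≤ S := by
    intro S hS
    rw [hDdef, LieAlgebra.derivedSeries_def, LieAlgebra.derivedSeriesOfIdeal_succ,
      LieAlgebra.derivedSeriesOfIdeal_zero, LieIdeal.toLieSubalgebra_toSubmodule,
      LieSubmodule.lieIdeal_oper_eq_linear_span']
    refine Submodule.span_le.2 ?_
    rintro m ⟨x, -, y, -, rfl⟩
    exact hS x y
  have hval : ∀ (X : G) (v : (D : Submodule ℝ G)), ((adRestrict D X v : G)) = ⁅X, (v : G)⁆ := by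
    intro X v; rfl
  have haZ_ne : aZ ≠ 0 := by
    intro h0
    rw [h0, Submodule.span_zero_singleton] at hspan
    rw [hspan, finrank_bot] at hA
    omega
  have hkey : ∀ (X : G) (v : (D : Submodule ℝ G)), adRestrict D X v ∈ Rng := by
    intro X v
    obtain ⟨c, hc⟩ : ∃ c : ℝ, adRestrict D X = c • aZ := by
      have hmem : adRestrict D X ∈ adSpan G := Submodule.subset_span ⟨X, rfl⟩
      rw [hspan] at hmem
      obtain ⟨c, hc⟩ := Submodule.mem_span_singleton.mp hmem
      exact ⟨c, hc.symm⟩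
    rw [hc]
    exact ⟨c • v, by rw [map_smul, LinearMap.smul_apply]⟩
  set RG : Submodule ℝ G := Submodule.map (D : Submodule ℝ G).subtype Rng with hRGdef
  have L1G : ∀ (X x : G), x ∈ (D : Submodule ℝ G) → ⁅X, x⁆ ∈ RG := by
    intro X x hx
    exact Submodule.mem_map.2 ⟨adRestrict D X ⟨x, hx⟩, hkey X ⟨x, hx⟩, hval X ⟨x, hx⟩⟩
  have L1G' : ∀ (X x : G), x ∈ (D : Submodule ℝ G) → ⁅x, X⁆ ∈ RG := by
    intro X x hx
    have h : ⁅x, X⁆ = -⁅X, x⁆ := by rw [← lie_skew]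
    rw [h]
    exact neg_mem (L1G X x hx)
  have hYzero : ∀ x ∈ (D : Submodule ℝ G), ⁅Y, x⁆ = 0 := by
    intro x hx
    have h := hval Y ⟨x, hx⟩
    rw [haY, LinearMap.zero_apply] at h
    exact h.symm
  have hbrk : ∀ (a b : G) (P : Submodule ℝ G), RG ≤ P → ⁅a, b⁆ ∈ P →
      ∀ x y : G, (∃ u ∈ (D : Submodule ℝ G), ∃ s t : ℝ, x = u + s • a + t • b) →
      (∃ u ∈ (D : Submodule ℝ G), ∃ s t : ℝ, y = u + s • a + t • b) → ⁅x, y⁆ ∈ P := by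
    rintro a b P hRP hab x y ⟨u, hu, s, t, rfl⟩ ⟨u', hu', s', t', rfl⟩
    have h1 : ⁅u, u'⁆ = 0 := habelian u u' hu hu'
    have expand : ⁅u + s • a + t • b, u' + s' • a + t' • b⁆ =
        ⁅u, u'⁆ + ((s' • ⁅u, a⁆ + t' • ⁅u, b⁆) + ((s • ⁅a, u'⁆ + t • ⁅b, u'⁆) +
          ((s * t') • ⁅a, b⁆ + (t * s') • ⁅b, a⁆))) := by
      simp only [add_lie, lie_add, lie_smul, smul_lie, lie_self, smul_smul, smul_zero,
        add_zero, zero_add]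
      module
    rw [expand, h1, zero_add]
    refine add_mem (add_mem ?_ ?_) (add_mem (add_mem ?_ ?_) (add_mem ?_ ?_))
    · exact Submodule.smul_mem _ _ (hRP (L1G' a u hu))
    · exact Submodule.smul_mem _ _ (hRP (L1G' b u hu))
    · exact Submodule.smul_mem _ _ (hRP (L1G a u' hu'))
    · exact Submodule.smul_mem _ _ (hRP (L1G b u' hu'))
    · exact Submodule.smul_mem _ _ hab
    · have h2 : ⁅b, a⁆ = -⁅a, b⁆ := by rw [← lie_skew]
      rw [h2]
      exact Submodule.smul_mem _ _ (neg_mem hab)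
  have hYZind' : ∀ s t : ℝ, s • Y + t • Z ∈ (D : Submodule ℝ G) → s = 0 ∧ t = 0 := by
    intro s t hst
    have hlin : adRestrict D (s • Y + t • Z) = s • adRestrict D Y + t • aZ := by
      apply LinearMap.ext; intro v
      refine Subtype.ext ?_
      have h1 := hval (s • Y + t • Z) v
      simp only [LinearMap.add_apply, LinearMap.smul_apply, Submodule.coe_add,
        SetLike.val_smul, h1, haZdef, hval, add_lie, smul_lie]
    have hDact : adRestrict D (s • Y + t • Z) = 0 := by
      apply LinearMap.ext; intro v
      refine Subtype.ext ?_
      rw [hval]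
      rw [LinearMap.zero_apply]
      exact habelian _ v hst v.2
    rw [hDact, haY, smul_zero, zero_add] at hlin
    have ht : t = 0 := by
      by_contra h
      exact haZ_ne (by
        have := hlin.symm
        rcases smul_eq_zero.mp this with h' | h'
        · exact absurd h' h
        · exact h')
    refine ⟨?_, ht⟩
    rw [ht, zero_smul, add_zero] at hst
    by_contra hs
    exact hY (by
      have : Y = s⁻¹ • (s • Y) := by rw [smul_smul, inv_mul_cancel₀ hs, one_smul]
      rw [this]
      exact Submodule.smul_mem _ _ hst)
  have hVdim : finrank ℝ (D : Submodule ℝ G) = n - 2 := hdim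
  have hdisjYZ : (D : Submodule ℝ G) ⊓ Submodule.span ℝ {Y, Z} = ⊥ := by
    rw [Submodule.eq_bot_iff]
    rintro x ⟨hxD, hxS⟩
    obtain ⟨s, t, hx⟩ := Submodule.mem_span_pair.mp hxS
    obtain ⟨hs, ht⟩ := hYZind' s t (hx ▸ hxD)
    rw [← hx, hs, ht, zero_smul, zero_smul, add_zero]
  have htop : (D : Submodule ℝ G) ⊔ Submodule.span ℝ {Y, Z} = ⊤ := by
    have hsdim : finrank ℝ (Submodule.span ℝ ({Y, Z} : Set G)) = 2 := by
      have hr : ({Y, Z} : Set G) = Set.range ![Y, Z] := by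
        simp only [Matrix.range_cons, Matrix.range_empty, Set.union_empty,
          Set.union_singleton]
        exact Set.pair_comm Y Z
      rw [hr, finrank_span_eq_card hind]
      simp
    have hsum := Submodule.finrank_sup_add_finrank_inf_eq (D : Submodule ℝ G)
      (Submodule.span ℝ {Y, Z})
    rw [hdisjYZ, finrank_bot, hVdim, hsdim] at hsum
    apply Submodule.eq_top_of_finrank_eq
    rw [hn]
    omega
  have hdecomp : ∀ x : G, ∃ u ∈ (D : Submodule ℝ G), ∃ s t : ℝ, x = u + s • Y + t • Z := by
    intro x
    have hx : x ∈ (D : Submodule ℝ G) ⊔ Submodule.span ℝ {Y, Z} := htop ▸ Submodule.mem_top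
    obtain ⟨u, hu, p, hp, rfl⟩ := Submodule.mem_sup.mp hx
    obtain ⟨s, t, hp'⟩ := Submodule.mem_span_pair.mp hp
    exact ⟨u, hu, s, t, by rw [← hp', add_assoc]⟩
  have hDle : (D : Submodule ℝ G) ≤ RG ⊔ Submodule.span ℝ {⁅Y, Z⁆} := by
    refine hspanD _ fun x y => hbrk Y Z _ le_sup_left
      (Submodule.mem_sup_right (Submodule.mem_span_singleton_self _)) x y (hdecomp x) (hdecomp y)
  have hRGrank : finrank ℝ RG = finrank ℝ Rng :=
    Submodule.finrank_map_subtype_eq (D : Submodule ℝ G) Rng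
  have hker1 : finrank ℝ (LinearMap.ker aZ) = 1 ∧ finrank ℝ Rng = n - 3 := by
    have hrn : finrank ℝ Rng + finrank ℝ (LinearMap.ker aZ) = n - 2 := by
      rw [← hVdim]
      exact LinearMap.finrank_range_add_finrank_ker aZ
    have hkpos : 0 < finrank ℝ (LinearMap.ker aZ) := by
      have hne : LinearMap.ker aZ ≠ ⊥ := fun h => hsing (LinearMap.ker_eq_bot.mp h)
      obtain ⟨x, hx, hx0⟩ := (LinearMap.ker aZ).ne_bot_iff.mp hne
      exact Module.finrank_pos_iff_exists_ne_zero.mpr ⟨⟨x, hx⟩, fun h' => hx0 (congrArg Subtype.val h')⟩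
    have hge : n - 2 ≤ finrank ℝ RG + 1 := by
      have h1 := Submodule.finrank_mono hDle
      have h2 := Submodule.finrank_sup_add_finrank_inf_eq RG
        (Submodule.span ℝ {⁅Y, Z⁆})
      have h3 : finrank ℝ (Submodule.span ℝ ({⁅Y, Z⁆} : Set G)) = 1 :=
        finrank_span_singleton hYZ
      rw [hVdim] at h1
      omega
    rw [hRGrank] at hge
    omega
  have hWRG : ⁅Y, Z⁆ ∉ RG := by
    intro hmem
    have hle : (D : Submodule ℝ G) ≤ RG := by
      refine hDle.trans ?_
      rw [sup_le_iff]
      exact ⟨le_rfl, Submodule.span_le.2 (Set.singleton_subset_iff.2 hmem)⟩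
    have h1 := Submodule.finrank_mono hle
    rw [hVdim, hRGrank, hker1.2] at h1
    omega
  -- part (i)
  have hmemI : ∀ (K : LieIdeal ℝ G) (x : G), x ∈ (K : Submodule ℝ G) ↔ x ∈ K := by
    intro K x
    rw [LieIdeal.toLieSubalgebra_toSubmodule]
    exact LieSubmodule.mem_toSubmodule (N := K)
  have hindec : ¬ ∃ I J : LieIdeal ℝ G, I ≠ ⊥ ∧ J ≠ ⊥ ∧ I ⊓ J = ⊥ ∧ I ⊔ J = ⊤ := by
    rintro ⟨I, J, hI, hJ, hIJ, hIJtop⟩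
    have hbr0 : ∀ i ∈ I, ∀ j ∈ J, ⁅i, j⁆ = 0 := by
      intro i hi j hj
      have h1 : ⁅i, j⁆ ∈ J := J.lie_mem hj
      have h2 : ⁅i, j⁆ ∈ I := by
        rw [← lie_skew]
        exact neg_mem (I.lie_mem hi)
      have h3 : ⁅i, j⁆ ∈ I ⊓ J := (LieSubmodule.mem_inf _ _ _).2 ⟨h2, h1⟩
      rw [hIJ] at h3
      simpa using h3
    have hsupIJ : (I : Submodule ℝ G) ⊔ (J : Submodule ℝ G) = ⊤ := by
      rw [LieIdeal.toLieSubalgebra_toSubmodule, LieIdeal.toLieSubalgebra_toSubmodule,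
        ← LieSubmodule.sup_toSubmodule, hIJtop, LieSubmodule.top_toSubmodule]
    have hcentral : ∀ I' J' : LieIdeal ℝ G, I' ⊓ J' = ⊥ → J' ≠ ⊥ →
        (∀ i ∈ I', ∀ j ∈ J', ⁅i, j⁆ = 0) →
        (D : Submodule ℝ G) ⊔ (I' : Submodule ℝ G) = ⊤ → False := by
      intro I' J' hIJ' hJ' hbr' hsupI
      have hmem' : ∀ x : G, ∃ u ∈ (D : Submodule ℝ G), ∃ i ∈ I', x = u + i := by
        intro x
        have hx : x ∈ (D : Submodule ℝ G) ⊔ (I' : Submodule ℝ G) := hsupI ▸ Submodule.mem_top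
        obtain ⟨u, hu, i, hi, rfl⟩ := Submodule.mem_sup.mp hx
        exact ⟨u, hu, i, (hmemI I' i).mp hi, rfl⟩
      have hbot : ∀ x : G, x ∈ I' → x ∈ J' → x = 0 := by
        intro x h1 h2
        have h3 : x ∈ I' ⊓ J' := (LieSubmodule.mem_inf _ _ _).2 ⟨h1, h2⟩
        rw [hIJ'] at h3
        simpa using h3
      have hDI : (D : Submodule ℝ G) ≤ (I' : Submodule ℝ G) := by
        apply hspanD
        intro x y
        obtain ⟨u, hu, i, hi, rfl⟩ := hmem' x
        obtain ⟨u', hu', i', hi', rfl⟩ := hmem' y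
        have e : ⁅u + i, u' + i'⁆ = ⁅u, u'⁆ + ⁅u, i'⁆ + (⁅i, u'⁆ + ⁅i, i'⁆) := by
          simp only [lie_add, add_lie]
          abel
        rw [e, habelian u u' hu hu', zero_add]
        refine add_mem ((hmemI I' _).mpr (I'.lie_mem hi')) (add_mem ?_ ((hmemI I' _).mpr (I'.lie_mem hi')))
        rw [← lie_skew]
        exact neg_mem ((hmemI I' _).mpr (I'.lie_mem hi))
      have hJcent : ∀ j ∈ J', ∀ x : G, ⁅j, x⁆ = 0 := by
        intro j hj x
        obtain ⟨u, hu, i, hi, rfl⟩ := hmem' x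
        have hju : ⁅j, u⁆ = 0 := by
          refine hbot _ (I'.lie_mem ((hmemI I' u).mp (hDI hu))) ?_
          rw [← lie_skew]
          exact neg_mem (J'.lie_mem hj)
        have hji : ⁅j, i⁆ = 0 := by
          refine hbot _ (I'.lie_mem hi) ?_
          rw [← lie_skew]
          exact neg_mem (J'.lie_mem hj)
        rw [lie_add, hju, hji, add_zero]
      obtain ⟨b, hbJ, hb0⟩ : ∃ b ∈ J', b ≠ 0 := by
        by_contra hb
        push_neg at hb
        exact hJ' (LieSubmodule.eq_bot_iff J' |>.mpr hb)
      obtain ⟨u, hu, s, t, rfl⟩ := hdecomp b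
      have hbD : u + s • Y + t • Z ∉ (D : Submodule ℝ G) := by
        intro hbD'
        exact hb0 (hbot _ ((hmemI I' _).mp (hDI hbD')) hbJ)
      have h1 := hJcent _ hbJ Z
      have h2 := hJcent _ hbJ Y
      have hs : s = 0 := by
        by_contra hs
        apply hWRG
        have e1 : ⁅u, Z⁆ + s • ⁅Y, Z⁆ = 0 := by
          simpa [add_lie, smul_lie, lie_self] using h1
        have e2 : s • ⁅Y, Z⁆ = -⁅u, Z⁆ := by
          rw [eq_neg_iff_add_eq_zero, add_comm]
          exact e1
        have e3 : ⁅Y, Z⁆ = s⁻¹ • (s • ⁅Y, Z⁆) := by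
          rw [smul_smul, inv_mul_cancel₀ hs, one_smul]
        rw [e3, e2]
        exact Submodule.smul_mem _ _ (neg_mem (L1G' Z u hu))
      have huY : ⁅u, Y⁆ = 0 := by
        rw [← lie_skew, hYzero u hu, neg_zero]
      have ht : t = 0 := by
        by_contra ht
        have e1 : t • ⁅Z, Y⁆ = 0 := by
          simpa [hs, add_lie, smul_lie, lie_self, huY] using h2
        have hZY : ⁅Z, Y⁆ = 0 := (smul_eq_zero.mp e1).resolve_left ht
        exact hYZ (by rw [← lie_skew, hZY, neg_zero])
      exact hbD (by rw [hs, ht]; simpa using hu)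
    have hsmall : ∀ S : Submodule ℝ G, (D : Submodule ℝ G) ⊔ S ≠ ⊤ →
        ∃ a ∈ S, S ≤ (D : Submodule ℝ G) ⊔ Submodule.span ℝ {a} := by
      intro S hS
      by_cases hSD : S ≤ (D : Submodule ℝ G)
      · exact ⟨0, S.zero_mem, hSD.trans le_sup_left⟩
      · obtain ⟨a, haS, haD⟩ := SetLike.not_le_iff_exists.mp hSD
        refine ⟨a, haS, ?_⟩
        have hsub : (D : Submodule ℝ G) ⊔ Submodule.span ℝ {a} ≤ (D : Submodule ℝ G) ⊔ S :=
          sup_le_sup_left (Submodule.span_le.2 (Set.singleton_subset_iff.2 haS)) _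
        have hlt : (D : Submodule ℝ G) < (D : Submodule ℝ G) ⊔ Submodule.span ℝ {a} := by
          refine lt_of_le_of_ne le_sup_left fun h => haD ?_
          rw [h]
          exact Submodule.mem_sup_right (Submodule.mem_span_singleton_self a)
        have h1 := Submodule.finrank_lt_finrank_of_lt hlt
        have h3 : finrank ℝ ((D : Submodule ℝ G) ⊔ S : Submodule ℝ G) < n := by
          have := Submodule.finrank_lt hS
          rw [hn] at this
          exact this
        have heq : (D : Submodule ℝ G) ⊔ Submodule.span ℝ {a} = (D : Submodule ℝ G) ⊔ S := by
          apply Submodule.eq_of_le_of_finrank_le hsub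
          have h2 := Submodule.finrank_mono hsub
          rw [hVdim] at h1
          omega
        intro x hx
        rw [heq]
        exact Submodule.mem_sup_right hx
    by_cases hcI : (D : Submodule ℝ G) ⊔ (I : Submodule ℝ G) = ⊤
    · exact hcentral I J hIJ hJ hbr0 hcI
    by_cases hcJ : (D : Submodule ℝ G) ⊔ (J : Submodule ℝ G) = ⊤
    · refine hcentral J I (by rw [inf_comm]; exact hIJ) hI
        (fun j hj i hi => by rw [← lie_skew, hbr0 i hi j hj, neg_zero]) hcJ
    obtain ⟨a, haI, haSp⟩ := hsmall _ hcI
    obtain ⟨b, hbJ, hbSp⟩ := hsmall _ hcJ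
    apply hWRG
    have hdec2 : ∀ x : G, ∃ u ∈ (D : Submodule ℝ G), ∃ s t : ℝ, x = u + s • a + t • b := by
      intro x
      have hx : x ∈ (I : Submodule ℝ G) ⊔ (J : Submodule ℝ G) := hsupIJ ▸ Submodule.mem_top
      obtain ⟨i, hi, j, hj, rfl⟩ := Submodule.mem_sup.mp hx
      obtain ⟨u1, hu1, p1, hp1, hi'⟩ := Submodule.mem_sup.mp (haSp hi)
      obtain ⟨u2, hu2, p2, hp2, hj'⟩ := Submodule.mem_sup.mp (hbSp hj)
      obtain ⟨s, hs⟩ := Submodule.mem_span_singleton.mp hp1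
      obtain ⟨t, ht⟩ := Submodule.mem_span_singleton.mp hp2
      refine ⟨u1 + u2, add_mem hu1 hu2, s, t, ?_⟩
      rw [← hi', ← hj', ← hs, ← ht]
      abel
    have hab : ⁅a, b⁆ = 0 := hbr0 a ((hmemI I a).mp haI) b ((hmemI J b).mp hbJ)
    exact hbrk a b RG le_rfl (by rw [hab]; exact RG.zero_mem) Y Z (hdec2 Y) (hdec2 Z)
  refine ⟨hindec, hker1.2, ?_⟩
  set w : (D : Submodule ℝ G) := ⟨⁅Y, Z⁆, (hmemI D _).mpr hw⟩ with hwdef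
  have hwcoe : (w : G) = ⁅Y, Z⁆ := rfl
  have hwRng : w ∉ Rng := by
    intro hmem
    exact hWRG (Submodule.mem_map.2 ⟨w, hmem, rfl⟩)
  have hmemmap : ∀ (S : Submodule ℝ (D : Submodule ℝ G)) (v : (D : Submodule ℝ G)),
      v ∈ S ↔ (v : G) ∈ Submodule.map (D : Submodule ℝ G).subtype S := by
    intro S v
    constructor
    · exact fun h => Submodule.mem_map.2 ⟨v, h, rfl⟩
    · rintro h
      obtain ⟨y, hy, hyv⟩ := Submodule.mem_map.1 h
      rwa [show y = v from Subtype.ext hyv] at hy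
  have hKer := hker1.1
  obtain ⟨k, hkK, hk0⟩ : ∃ k, k ∈ LinearMap.ker aZ ∧ k ≠ 0 := by
    have hne : LinearMap.ker aZ ≠ ⊥ := fun h => hsing (LinearMap.ker_eq_bot.mp h)
    exact (LinearMap.ker aZ).ne_bot_iff.mp hne
  have hKspan : LinearMap.ker aZ = Submodule.span ℝ {k} := by
    refine (Submodule.eq_of_le_of_finrank_le
      (Submodule.span_le.2 (Set.singleton_subset_iff.2 hkK)) ?_).symm
    rw [hKer, finrank_span_singleton hk0]
  obtain ⟨w₀, hw₀R, u₀, hu₀, hcase⟩ :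
      ∃ w₀, w₀ ∉ Rng ∧ ∃ u₀ : (D : Submodule ℝ G), aZ u₀ = w₀ - w ∧
        ((aZ w₀ = 0 ∧ LinearMap.ker aZ ⊓ Rng = ⊥) ∨ LinearMap.ker aZ ≤ Rng) := by
    by_cases hKR : LinearMap.ker aZ ⊓ Rng = ⊥
    · have hcompl : LinearMap.ker aZ ⊔ Rng = ⊤ := by
        apply Submodule.eq_top_of_finrank_eq
        have hsum := Submodule.finrank_sup_add_finrank_inf_eq (LinearMap.ker aZ) Rng
        rw [hKR, finrank_bot] at hsum
        rw [hVdim]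
        rw [hKer, hker1.2] at hsum
        omega
      obtain ⟨p, hp, q, hq, hpq⟩ := Submodule.mem_sup.mp (hcompl ▸ Submodule.mem_top (x := w))
      obtain ⟨uq, huq⟩ := hq
      have hqR : q ∈ Rng := ⟨uq, huq⟩
      refine ⟨p, ?_, -uq, ?_, Or.inl ⟨hp, hKR⟩⟩
      · intro hpR
        apply hwRng
        rw [← hpq]
        exact add_mem hpR hqR
      · rw [map_neg, huq, ← hpq]
        abel
    · have hKR' : LinearMap.ker aZ ≤ Rng := by
        have hfr : 0 < finrank ℝ (LinearMap.ker aZ ⊓ Rng : Submodule ℝ _) := by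
          obtain ⟨x, hx, hx0⟩ := (LinearMap.ker aZ ⊓ Rng).ne_bot_iff.mp hKR
          exact Module.finrank_pos_iff_exists_ne_zero.mpr ⟨⟨x, hx⟩, fun h' => hx0 (congrArg Subtype.val h')⟩
        have heq : LinearMap.ker aZ ⊓ Rng = LinearMap.ker aZ := by
          apply Submodule.eq_of_le_of_finrank_le inf_le_left
          rw [hKer]
          omega
        rw [← heq]
        exact inf_le_right
      exact ⟨w, hwRng, 0, by rw [map_zero]; rw [sub_self], Or.inr hKR'⟩
  have hRngdim : finrank ℝ Rng = n - 4 + 1 := by rw [hker1.2]; omega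
  obtain ⟨e, hecase⟩ : ∃ e : Basis (Fin (n - 4 + 1)) ℝ Rng,
      (aZ w₀ = 0 ∧ LinearMap.ker aZ ⊓ Rng = ⊥) ∨
        (((e 0 : (D : Submodule ℝ G))) = k ∧ LinearMap.ker aZ = Submodule.span ℝ {k}) := by
    rcases hcase with h | h
    · exact ⟨(finBasis ℝ Rng).reindex (finCongr (by rw [hRngdim])), Or.inl h⟩
    · obtain ⟨e, he0⟩ := exists_basis_first hRngdim (⟨k, h hkK⟩ : Rng)
        (fun h' => hk0 (congrArg Subtype.val h'))
      refine ⟨e, Or.inr ⟨?_, hKspan⟩⟩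
      rw [he0]
  set e' : Basis (Fin (n - 3)) ℝ Rng := e.reindex (finCongr (by omega)) with he'def
  have hpos0 : 0 < n - 3 := by omega
  have hE0 : e' ⟨0, hpos0⟩ = e 0 := by
    rw [he'def, Basis.reindex_apply]
    congr 1
  have hspanRe : Submodule.span ℝ
      (Set.range fun i : Fin (n - 3) => ((e' i : Rng) : (D : Submodule ℝ G))) = Rng := by
    have him : (Set.range fun i : Fin (n - 3) => ((e' i : Rng) : (D : Submodule ℝ G))) =
        Rng.subtype '' Set.range e' := by
      rw [← Set.range_comp]; rfl
    rw [him, Submodule.span_image, Basis.span_eq, Submodule.map_subtype_top]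
  set g : Fin (n - 3 + 1) → (D : Submodule ℝ G) :=
    Fin.snoc (fun i => ((e' i : Rng) : (D : Submodule ℝ G))) w₀ with hgdef
  have hli : LinearIndependent ℝ g := by
    rw [hgdef, linearIndependent_fin_snoc]
    refine ⟨(e'.linearIndependent).map' Rng.subtype (Submodule.ker_subtype _), ?_⟩
    rw [hspanRe]
    exact hw₀R
  have hcard : Fintype.card (Fin (n - 3 + 1)) = finrank ℝ (D : Submodule ℝ G) := by
    rw [Fintype.card_fin, hVdim]
    omega
  set B := basisOfLinearIndependentOfCardEqFinrank hli hcard with hBdef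
  have hB : ⇑B = g := coe_basisOfLinearIndependentOfCardEqFinrank hli hcard
  have hBlast : B (Fin.last (n - 3)) = w₀ := by
    rw [show B (Fin.last (n - 3)) = g (Fin.last (n - 3)) from congrFun hB _, hgdef]
    exact Fin.snoc_last _ _
  have hBcast : ∀ i : Fin (n - 3), B (Fin.castSucc i) = ((e' i : Rng) : (D : Submodule ℝ G)) := by
    intro i
    rw [show B (Fin.castSucc i) = g (Fin.castSucc i) from congrFun hB _, hgdef]
    exact Fin.snoc_castSucc _ _ _
  have hlastR : ∀ v : (D : Submodule ℝ G), v ∈ Rng → B.repr v (Fin.last (n - 3)) = 0 := by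
    intro v hv
    have hvspan : v ∈ Submodule.span ℝ (⇑B '' Set.range Fin.castSucc) := by
      have himg : ⇑B '' Set.range Fin.castSucc =
          Set.range fun i : Fin (n - 3) => ((e' i : Rng) : (D : Submodule ℝ G)) := by
        rw [← Set.range_comp]
        have hfe : (⇑B ∘ Fin.castSucc) =
            fun i : Fin (n - 3) => ((e' i : Rng) : (D : Submodule ℝ G)) :=
          funext fun i => hBcast i
        rw [hfe]
      rw [himg, hspanRe]
      exact hv
    have hsupp := B.mem_span_image.mp hvspan
    by_contra h0
    obtain ⟨i, hi⟩ := hsupp (Finsupp.mem_support_iff.mpr h0)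
    exact (Fin.castSucc_lt_last i).ne hi
  have hrepr : ∀ (em : Fin (n - 3) → Fin (n - 3 + 1)) (c : Fin (n - 3) → ℝ)
      (i : Fin (n - 3 + 1)), B.repr (aZ (∑ j, c j • B (em j))) i =
        ∑ j, c j * (LinearMap.toMatrix B B aZ) i (em j) := by
    intro em c i
    rw [map_sum]
    simp only [map_smul, map_sum, Finsupp.coe_finset_sum, Finset.sum_apply, Finsupp.coe_smul,
      Pi.smul_apply, smul_eq_mul, LinearMap.toMatrix_apply]
  have hinj : ∀ (em : Fin (n - 3) → Fin (n - 3 + 1)),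
      (∀ c : Fin (n - 3) → ℝ, (∑ j, c j • B (em j)) ∈ LinearMap.ker aZ → c = 0) →
      ∀ A : Matrix (Fin (n - 3)) (Fin (n - 3)) ℝ,
      (∀ i j, A i j = (LinearMap.toMatrix B B aZ) (Fin.castSucc i) (em j)) → IsUnit A := by
    intro em hker A hA
    rw [← Matrix.mulVec_injective_iff_isUnit]
    have h0 : ∀ c, A.mulVec c = 0 → c = 0 := by
      intro c hc
      apply hker c
      rw [LinearMap.mem_ker]
      have hz : ∀ i, B.repr (aZ (∑ j, c j • B (em j))) i = 0 := by
        intro i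
        induction i using Fin.lastCases with
        | last => exact hlastR _ ⟨_, rfl⟩
        | cast i =>
          rw [hrepr]
          have hci := congrFun hc i
          simp only [Matrix.mulVec, dotProduct, Pi.zero_apply] at hci
          rw [← hci]
          refine Finset.sum_congr rfl fun j _ => ?_
          rw [hA, mul_comm]
      have hz' : B.repr (aZ (∑ j, c j • B (em j))) = 0 := DFunLike.ext _ _ hz
      exact B.repr.map_eq_zero_iff.mp hz'
    intro c c' hcc
    have hsub := h0 (c - c') (by rw [Matrix.mulVec_sub, hcc, sub_self])
    exact sub_eq_zero.mp hsub
  refine ⟨B, -Y + (u₀ : G), Z, ?_, ?_, ?_, ?_, ?_⟩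
  · rw [Submodule.eq_bot_iff]
    rintro x ⟨hxD, hxS⟩
    obtain ⟨c, d, hcd⟩ := Submodule.mem_span_pair.mp hxS
    have hx2 : (-c) • Y + d • Z ∈ (D : Submodule ℝ G) := by
      have heq : (-c) • Y + d • Z = x - c • (u₀ : G) := by
        rw [← hcd]
        module
      rw [heq]
      exact sub_mem hxD (Submodule.smul_mem _ _ u₀.2)
    obtain ⟨hc, hd⟩ := hYZind' _ _ hx2
    rw [neg_eq_zero] at hc
    rw [← hcd, hc, hd, zero_smul, zero_smul, add_zero]
  · rw [eq_top_iff, ← htop]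
    refine sup_le le_sup_left (Submodule.span_le.2 ?_)
    intro z hz
    rcases Set.mem_insert_iff.mp hz with hzY | hz'
    · rw [hzY]
      have h1 : ((u₀ : G)) ∈ (D : Submodule ℝ G) ⊔ Submodule.span ℝ {-Y + (u₀ : G), Z} :=
        Submodule.mem_sup_left u₀.2
      have h2 : (-Y + (u₀ : G)) ∈ (D : Submodule ℝ G) ⊔ Submodule.span ℝ {-Y + (u₀ : G), Z} :=
        Submodule.mem_sup_right (Submodule.subset_span (Set.mem_insert _ _))
      have h3 := sub_mem h1 h2
      have heq : (u₀ : G) - (-Y + (u₀ : G)) = Y := by abel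
      rwa [heq] at h3
    · rw [Set.mem_singleton_iff.mp hz']
      exact Submodule.mem_sup_right (Submodule.subset_span (Set.mem_insert_iff.mpr (Or.inr rfl)))
  · have hexp : ⁅Z, -Y + (u₀ : G)⁆ = ⁅Y, Z⁆ + ((aZ u₀ : (D : Submodule ℝ G)) : G) := by
      rw [lie_add, lie_neg, lie_skew, hval]
    rw [hexp, hu₀, hBlast, AddSubgroupClass.coe_sub, hwcoe]
    abel
  · intro i
    have hmem := (B i).2
    rw [add_lie, neg_lie, hYzero _ hmem, neg_zero, zero_add]
    exact habelian _ _ ((hmemI D _).mp u₀.2) ((hmemI D _).mp hmem)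
  · rcases hecase with ⟨hw₀0, hKRbot⟩ | ⟨he0k, hKs⟩
    · refine ⟨fun i j => (LinearMap.toMatrix B B aZ) (Fin.castSucc i) (Fin.castSucc j),
        ?_, Or.inl ?_⟩
      · refine hinj Fin.castSucc ?_ _ (fun i j => rfl)
        intro c hc
        have hvR : (∑ j, c j • B (Fin.castSucc j)) ∈ Rng := by
          refine Submodule.sum_mem _ fun j _ => Submodule.smul_mem _ _ ?_
          rw [hBcast]
          exact (e' j).2
        have hmem2 : (∑ j, c j • B (Fin.castSucc j)) ∈ LinearMap.ker aZ ⊓ Rng := ⟨hc, hvR⟩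
        rw [hKRbot] at hmem2
        have h0 : ∑ j, c j • B (Fin.castSucc j) = 0 := (Submodule.mem_bot ℝ).mp hmem2
        have hli2 : LinearIndependent ℝ fun j : Fin (n - 3) => B (Fin.castSucc j) :=
          B.linearIndependent.comp _ (Fin.castSucc_injective _)
        exact funext (Fintype.linearIndependent_iff.mp hli2 c h0)
      · funext i j
        by_cases hij : (i : ℕ) < n - 3 ∧ (j : ℕ) < n - 3
        · simp only [blockDiag, dif_pos hij]
          have h1 : Fin.castSucc (⟨(i : ℕ), hij.1⟩ : Fin (n - 3)) = i := by
            ext; simp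
          have h2 : Fin.castSucc (⟨(j : ℕ), hij.2⟩ : Fin (n - 3)) = j := by
            ext; simp
          rw [h1, h2]
        · simp only [blockDiag, dif_neg hij]
          rcases not_and_or.mp hij with hi | hj
          · have hilast : i = Fin.last (n - 3) := by
              apply Fin.ext
              rw [Fin.val_last]
              have h1 := i.isLt
              omega
            rw [hilast, LinearMap.toMatrix_apply]
            exact hlastR _ ⟨_, rfl⟩
          · have hjlast : j = Fin.last (n - 3) := by
              apply Fin.ext
              rw [Fin.val_last]
              have h1 := j.isLt
              omega
            rw [hjlast, LinearMap.toMatrix_apply, hBlast, hw₀0]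
            rw [map_zero]; rfl
    · have hB0 : B (0 : Fin (n - 3 + 1)) = k := by
        have h00 : (0 : Fin (n - 3 + 1)) = Fin.castSucc (⟨0, hpos0⟩ : Fin (n - 3)) := by
          apply Fin.ext
          simp
        rw [h00, hBcast, hE0, he0k]
      refine ⟨fun i j => (LinearMap.toMatrix B B aZ) (Fin.castSucc i) (Fin.succ j),
        ?_, Or.inr ?_⟩
      · refine hinj Fin.succ ?_ _ (fun i j => rfl)
        intro c hc
        rw [hKs] at hc
        obtain ⟨a, ha⟩ := Submodule.mem_span_singleton.mp hc
        funext j₀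
        have hL : B.repr (a • k) (Fin.succ j₀) = 0 := by
          rw [map_smul, ← hB0, Basis.repr_self]
          simp [Finsupp.single_apply, (Fin.succ_ne_zero j₀).symm]
        have hR : B.repr (∑ j, c j • B (Fin.succ j)) (Fin.succ j₀) = c j₀ := by
          rw [map_sum]
          simp only [map_smul, Basis.repr_self, Finsupp.coe_finset_sum, Finset.sum_apply,
            Finsupp.coe_smul, Pi.smul_apply, smul_eq_mul, Finsupp.single_apply]
          rw [Finset.sum_eq_single j₀]
          · simp
          · intro b _ hb
            rw [if_neg fun h => hb (Fin.succ_injective _ h), mul_zero]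
          · intro h
            exact absurd (Finset.mem_univ _) h
        have hc0 : c j₀ = 0 := by rw [← hR, ← ha, hL]
        simp [hc0]
      · funext i j
        by_cases hij : (i : ℕ) < n - 3 ∧ 0 < (j : ℕ)
        · simp only [blockShift, dif_pos hij]
          have h1 : Fin.castSucc (⟨(i : ℕ), hij.1⟩ : Fin (n - 3)) = i := by
            ext; simp
          have h2 : Fin.succ (⟨(j : ℕ) - 1, by have := j.isLt; omega⟩ : Fin (n - 3)) = j := by
            ext
            simp only [Fin.val_succ]
            omega
          rw [h1, h2]
        · simp only [blockShift, dif_neg hij]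
          rcases not_and_or.mp hij with hi | hj
          · have hilast : i = Fin.last (n - 3) := by
              apply Fin.ext
              rw [Fin.val_last]
              have h1 := i.isLt
              omega
            rw [hilast, LinearMap.toMatrix_apply]
            exact hlastR _ ⟨_, rfl⟩
          · have hj0 : j = 0 := by
              apply Fin.ext
              simp only [Fin.val_zero]
              omega
            rw [hj0, LinearMap.toMatrix_apply, hB0, show aZ k = 0 from hkK]
            rw [map_zero]; rfl
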